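/- Let (Ω,ρ) be a metric space, r ∈ [1,∞), and n a positive integer. For every integer k with 1 ≤ k ≤ 32n and every subset S ⊆ Ω with |S| = k, the minimax risk for estimating a Borel probability measure on Ω from n i.i.d. samples under W_r^r loss satisfies inf_{P̂} sup_{P} E_{X_1,…,X_n ∼ P^n}[ W_r^r(P, P̂(X_1,…,X_n)) ] ≥ (3·log 2 / 2^{r+12}) · Sep(S)^r · √((k−1)/n), where Sep(S) := inf_{x≠y∈S} ρ(x,y), the supremum is over all Borel probability measures P on Ω, and the infimum is over all (possibly randomized) measurable estimators P̂ : Ω^n → {Borel probability measures on Ω}. -/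

import Mathlib

open MeasureTheory ENNReal

noncomputable section

/-- The set of couplings of two measures. -/
def couplings {Ω : Type*} [MeasurableSpace Ω] (P Q : Measure Ω) : Set (Measure (Ω × Ω)) :=
  {μ | μ.map Prod.fst = P ∧ μ.map Prod.snd = Q}

/-- `W_r^r(P,Q)`, the `r`-th power of the `r`-Wasserstein distance. -/
def wassersteinPow {Ω : Type*} [MeasurableSpace Ω] [PseudoEMetricSpace Ω] (r : ℝ)
    (P Q : Measure Ω) : ℝ≥0∞ :=
  ⨅ μ ∈ couplings P Q, ∫⁻ p : Ω × Ω, edist p.1 p.2 ^ r ∂μ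

/-- The `r`-Wasserstein distance. -/
def wasserstein {Ω : Type*} [MeasurableSpace Ω] [PseudoEMetricSpace Ω] (r : ℝ)
    (P Q : Measure Ω) : ℝ≥0∞ :=
  (wassersteinPow r P Q) ^ (1 / r)

/-- The empirical measure of `n` samples. -/
def empiricalMeasure {Ω : Type*} [MeasurableSpace Ω] (n : ℕ) (x : Fin n → Ω) : Measure Ω :=
  (n : ℝ≥0∞)⁻¹ • ∑ i : Fin n, Measure.dirac (x i)

/-- `𝒮` is a countable-or-not Borel partition of the set `B`. -/
def IsBorelPartitionOf {Ω : Type*} [MeasurableSpace Ω] (𝒮 : Set (Set Ω)) (B : Set Ω) : Prop :=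
  (∀ S ∈ 𝒮, MeasurableSet S) ∧ ⋃₀ 𝒮 = B ∧ 𝒮.PairwiseDisjoint id

/-- The resolution of a partition: the largest diameter of any of its elements. -/
def partRes {Ω : Type*} [PseudoEMetricSpace Ω] (𝒮 : Set (Set Ω)) : ℝ≥0∞ :=
  ⨆ S ∈ 𝒮, EMetric.diam S

/-- The `ε`-covering number of a Borel set `B`: the minimal cardinality of a countable
Borel partition of `B` all of whose elements have diameter at most `ε`. -/
def coveringNumber {Ω : Type*} [MeasurableSpace Ω] [PseudoEMetricSpace Ω]
    (B : Set Ω) (ε : ℝ) : ℝ≥0∞ :=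
  ⨅ (𝒮 : Set (Set Ω)) (_ : IsBorelPartitionOf 𝒮 B ∧ 𝒮.Countable ∧
      ∀ S ∈ 𝒮, EMetric.diam S ≤ ENNReal.ofReal ε), (𝒮.encard : ℝ≥0∞)

/-- The separation of a set: the smallest distance between distinct points. -/
def eSep {Ω : Type*} [PseudoEMetricSpace Ω] (S : Set Ω) : ℝ≥0∞ :=
  ⨅ (x ∈ S) (y ∈ S) (_ : x ≠ y), edist x y

/-- `|a - b|` for extended nonnegative reals. -/
def ennrDiff (a b : ℝ≥0∞) : ℝ≥0∞ := (a - b) + (b - a)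

/-- The `ℓ`-th metric moment of `P` about `x₀`. -/
def metricMoment {Ω : Type*} [MeasurableSpace Ω] [PseudoEMetricSpace Ω]
    (P : Measure Ω) (x₀ : Ω) (ℓ : ℝ) : ℝ≥0∞ :=
  (∫⁻ y, edist x₀ y ^ ℓ ∂P) ^ (1 / ℓ)

end

lemma eSep_le {Ω : Type*} [PseudoEMetricSpace Ω] {S : Set Ω} {x y : Ω}
    (hx : x ∈ S) (hy : y ∈ S) (hxy : x ≠ y) : eSep S ≤ edist x y := by
  unfold eSep
  exact iInf₂_le_of_le x hx (iInf₂_le_of_le y hy (iInf_le _ hxy))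

lemma sqrt_prod' {ι : Type*} (s : Finset ι) (f : ι → ℝ) (hf : ∀ i ∈ s, 0 ≤ f i) :
    Real.sqrt (∏ i ∈ s, f i) = ∏ i ∈ s, Real.sqrt (f i) := by
  induction s using Finset.cons_induction with
  | empty => simp
  | cons a s ha ih =>
    rw [Finset.prod_cons, Finset.prod_cons, Real.sqrt_mul (hf a (Finset.mem_cons_self a s)),
      ih (fun i hi => hf i (Finset.mem_cons_of_mem hi))]

lemma ofReal_min' (a b : ℝ) :
    ENNReal.ofReal (min a b) = min (ENNReal.ofReal a) (ENNReal.ofReal b) := by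
  rcases le_total a b with h | h
  · rw [min_eq_left h, min_eq_left (ENNReal.ofReal_le_ofReal h)]
  · rw [min_eq_right h, min_eq_right (ENNReal.ofReal_le_ofReal h)]

lemma pi_discrete {Ω : Type*} [MeasurableSpace Ω] {ι : Type*} [Fintype ι] [DecidableEq ι]
    (n : ℕ) (y : ι → Ω) (c : ι → ℝ≥0∞) (hc : ∑ v, c v = 1) :
    Measure.pi (fun _ : Fin n => ∑ v, c v • Measure.dirac (y v)) =
      ∑ f : Fin n → ι, (∏ i, c (f i)) • Measure.dirac (fun i => y (f i)) := by
  have hP : IsProbabilityMeasure (∑ v, c v • Measure.dirac (y v)) := by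
    constructor
    rw [Measure.finset_sum_apply]
    simp only [Measure.smul_apply, measure_univ, smul_eq_mul, mul_one]
    exact hc
  classical
  refine Measure.pi_eq fun B hB => ?_
  have hBox : MeasurableSet (Set.univ.pi B) := MeasurableSet.univ_pi hB
  rw [Measure.finset_sum_apply]
  have hterm : ∀ f : Fin n → ι,
      ((∏ i, c (f i)) • Measure.dirac (fun i => y (f i))) (Set.univ.pi B)
        = ∏ i, (c (f i) * if y (f i) ∈ B i then 1 else 0) := by
    intro f
    rw [Measure.smul_apply, Measure.dirac_apply' _ hBox, smul_eq_mul, Set.indicator_apply,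
      Finset.prod_mul_distrib, Finset.prod_boole]
    have : ((fun i => y (f i)) ∈ Set.univ.pi B) ↔ (∀ i ∈ Finset.univ, y (f i) ∈ B i) := by
      simp [Set.mem_univ_pi]
    simp only [Pi.one_apply]
    by_cases h : (fun i => y (f i)) ∈ Set.univ.pi B
    · rw [if_pos h, if_pos (this.mp h)]
    · rw [if_neg h, if_neg (fun hh => h (this.mpr hh))]
  calc ∑ f : Fin n → ι, ((∏ i, c (f i)) • Measure.dirac (fun i => y (f i))) (Set.univ.pi B)
      = ∑ f : Fin n → ι, ∏ i, (c (f i) * if y (f i) ∈ B i then 1 else 0) :=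
        Finset.sum_congr rfl fun f _ => hterm f
    _ = ∏ i : Fin n, ∑ v, (c v * if y v ∈ B i then 1 else 0) := by
        rw [Finset.prod_univ_sum (fun _ => Finset.univ) (fun i v => c v * if y v ∈ B i then 1 else 0),
          Fintype.piFinset_univ]
    _ = ∏ i : Fin n, (∑ v, c v • Measure.dirac (y v)) (B i) := by
        refine Finset.prod_congr rfl fun i _ => ?_
        rw [Measure.finset_sum_apply]
        refine (Finset.sum_congr rfl fun v _ => ?_).symm
        rw [Measure.smul_apply, Measure.dirac_apply' _ (hB i), smul_eq_mul, Set.indicator_apply]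
        simp

lemma cost_lb {Ω : Type*} [MetricSpace Ω] [MeasurableSpace Ω] [BorelSpace Ω]
    {ι : Type*} [Fintype ι]
    (q : ι → Ω) (hq : Function.Injective q) (ε : ℝ≥0∞)
    (hsep : ∀ u v, u ≠ v → ε ≤ edist (q u) (q v))
    (r : ℝ) (hr : 0 ≤ r)
    (P Q : Measure Ω) [IsProbabilityMeasure Q]
    (w : ι → ℝ≥0∞) (hw : ∀ u, P {q u} = w u) (hsum : ∑ u, w u = 1) :
    (ε/2)^r * ∑ u, ((w u - Q (EMetric.ball (q u) (ε/2)))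
        + (Q (EMetric.ball (q u) (ε/2)) - w u))
      ≤ 2 * wassersteinPow r P Q := by
  set A : ι → Set Ω := fun u => EMetric.ball (q u) (ε/2) with hA
  have hAmeas : ∀ u, MeasurableSet (A u) := fun u => EMetric.isOpen_ball.measurableSet
  have hAdisj : Pairwise (Function.onFun Disjoint A) := by
    intro u v huv
    rw [Function.onFun, Set.disjoint_left]
    intro z hzu hzv
    have h1 : edist (q u) (q v) ≤ edist (q u) z + edist z (q v) := edist_triangle _ _ _
    have h2 : edist (q u) z + edist z (q v) < ε/2 + ε/2 := by
      refine ENNReal.add_lt_add ?_ (EMetric.mem_ball.mp hzv)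
      rw [edist_comm]; exact EMetric.mem_ball.mp hzu
    rw [ENNReal.add_halves] at h2
    exact absurd (hsep u v huv) (not_le.mpr (lt_of_le_of_lt h1 h2))
  -- Part 1 : lower bound for every coupling
  have hW : (ε/2)^r * ∑ u, (w u - Q (A u)) ≤ wassersteinPow r P Q := by
    rw [wassersteinPow]
    refine le_iInf₂ fun μ hμ => ?_
    obtain ⟨hμ1, hμ2⟩ := hμ
    set F : ι → Set (Ω × Ω) := fun u => {q u} ×ˢ (A u)ᶜ with hF
    have hFmeas : ∀ u, MeasurableSet (F u) :=
      fun u => (measurableSet_singleton _).prod (hAmeas u).compl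
    have hFdisj : Pairwise (Function.onFun Disjoint F) := by
      intro u v huv
      rw [Function.onFun, Set.disjoint_left]
      rintro ⟨a, b⟩ ha hb
      simp only [hF, Set.mem_prod, Set.mem_singleton_iff] at ha hb
      exact huv (hq (ha.1 ▸ hb.1))
    have hμF : ∀ u, w u - Q (A u) ≤ μ (F u) := by
      intro u
      have e1 : μ (Prod.fst ⁻¹' {q u}) = w u := by
        rw [← hw u, ← hμ1, Measure.map_apply measurable_fst (measurableSet_singleton _)]
      have e2 : μ ({q u} ×ˢ A u) ≤ Q (A u) := by
        rw [← hμ2, Measure.map_apply measurable_snd (hAmeas u)]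
        exact measure_mono fun p hp => hp.2
      have hsub : Prod.fst ⁻¹' {q u} ⊆ F u ∪ {q u} ×ˢ A u := by
        rintro ⟨a, b⟩ ha
        simp only [Set.mem_preimage, Set.mem_singleton_iff] at ha
        by_cases hb : b ∈ A u
        · exact Or.inr ⟨ha, hb⟩
        · exact Or.inl ⟨ha, hb⟩
      have hle : w u ≤ μ (F u) + μ ({q u} ×ˢ A u) := by
        rw [← e1]; exact (measure_mono hsub).trans (measure_union_le _ _)
      exact tsub_le_iff_right.mpr (hle.trans (add_le_add_right e2 _))
    have hUnion : ∑ u, (w u - Q (A u)) ≤ μ (⋃ u, F u) := by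
      rw [measure_iUnion hFdisj hFmeas, tsum_fintype]
      exact Finset.sum_le_sum fun u _ => hμF u
    have hUmeas : MeasurableSet (⋃ u, F u) := MeasurableSet.iUnion hFmeas
    have hpoint : ∀ p : Ω × Ω, p ∈ (⋃ u, F u) → (ε/2)^r ≤ edist p.1 p.2 ^ r := by
      rintro ⟨a, b⟩ hp
      rw [Set.mem_iUnion] at hp
      obtain ⟨u, ha, hb⟩ := hp
      rw [Set.mem_singleton_iff] at ha
      subst ha
      refine ENNReal.rpow_le_rpow ?_ hr
      have : ¬ edist b (q u) < ε/2 := fun hlt => hb hlt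
      rw [edist_comm]
      exact not_lt.mp this
    calc (ε/2)^r * ∑ u, (w u - Q (A u)) ≤ (ε/2)^r * μ (⋃ u, F u) :=
          mul_le_mul_right hUnion _
      _ = ∫⁻ p, (⋃ u, F u).indicator (fun _ => (ε/2)^r) p ∂μ :=
          (lintegral_indicator_const hUmeas _).symm
      _ ≤ ∫⁻ p : Ω × Ω, edist p.1 p.2 ^ r ∂μ := by
          refine lintegral_mono fun p => ?_
          by_cases hp : p ∈ ⋃ u, F u
          · rw [Set.indicator_of_mem hp]; exact hpoint p hp
          · rw [Set.indicator_of_notMem hp]; exact zero_le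
  -- Part 2 : the reversed differences are dominated
  have hQsum : ∑ u, Q (A u) ≤ 1 := by
    have h := measure_iUnion (μ := Q) hAdisj hAmeas
    rw [tsum_fintype] at h
    rw [← h]
    exact prob_le_one
  have hflip : ∑ u, (Q (A u) - w u) ≤ ∑ u, (w u - Q (A u)) := by
    have hsums : ∑ u, (w u - Q (A u)) + ∑ u, Q (A u) = ∑ u, (Q (A u) - w u) + 1 := by
      rw [← hsum, ← Finset.sum_add_distrib, ← Finset.sum_add_distrib]
      refine Finset.sum_congr rfl fun u _ => ?_
      rw [tsub_add_eq_max, tsub_add_eq_max, max_comm]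
    have h1 : ∑ u, (Q (A u) - w u) + 1 ≤ ∑ u, (w u - Q (A u)) + 1 := by
      rw [← hsums]; exact add_le_add_right hQsum _
    exact (ENNReal.add_le_add_iff_right ENNReal.one_ne_top).mp h1
  calc (ε/2)^r * ∑ u, ((w u - Q (A u)) + (Q (A u) - w u))
      = (ε/2)^r * ∑ u, (w u - Q (A u)) + (ε/2)^r * ∑ u, (Q (A u) - w u) := by
        rw [Finset.sum_add_distrib, mul_add]
    _ ≤ wassersteinPow r P Q + wassersteinPow r P Q :=
        add_le_add hW ((mul_le_mul_right hflip _).trans hW)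
    _ = 2 * wassersteinPow r P Q := (two_mul _).symm

lemma key_prod_sum {ι : Type*} [Fintype ι] (n : ℕ) (g : ι → ℝ) :
    ∑ f : Fin n → ι, ∏ i, g (f i) = (∑ v, g v) ^ n := by
  classical
  have h := (Finset.prod_univ_sum (fun _ : Fin n => (Finset.univ : Finset ι))
    (fun _ v => g v)).symm
  rw [Fintype.piFinset_univ] at h
  rw [h, Finset.prod_const, Finset.card_univ, Fintype.card_fin]

lemma lecam_min_sum {ι : Type*} [Fintype ι] (n : ℕ) (a b : ι → ℝ)
    (ha : ∀ v, 0 ≤ a v) (hb : ∀ v, 0 ≤ b v) (hsa : ∑ v, a v = 1) (hsb : ∑ v, b v = 1)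
    {A₀ : ℝ} (hA0 : 0 ≤ A₀) (hA : A₀ ≤ ∑ v, Real.sqrt (a v * b v)) :
    A₀ ^ (2 * n) / 2 ≤ ∑ f : Fin n → ι, min (∏ i, a (f i)) (∏ i, b (f i)) := by
  classical
  set Wa : (Fin n → ι) → ℝ := fun f => ∏ i, a (f i) with hWa
  set Wb : (Fin n → ι) → ℝ := fun f => ∏ i, b (f i) with hWb
  have hWa0 : ∀ f, 0 ≤ Wa f := fun f => Finset.prod_nonneg fun i _ => ha _
  have hWb0 : ∀ f, 0 ≤ Wb f := fun f => Finset.prod_nonneg fun i _ => hb _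
  have hmin0 : ∀ f, 0 ≤ min (Wa f) (Wb f) := fun f => le_min (hWa0 f) (hWb0 f)
  have hmax0 : ∀ f, 0 ≤ max (Wa f) (Wb f) := fun f => le_trans (hWa0 f) (le_max_left _ _)
  have hSmax : ∑ f, max (Wa f) (Wb f) ≤ 2 := by
    calc ∑ f, max (Wa f) (Wb f) ≤ ∑ f, (Wa f + Wb f) :=
          Finset.sum_le_sum fun f _ => max_le_add_of_nonneg (hWa0 f) (hWb0 f)
      _ = 2 := by
          rw [Finset.sum_add_distrib, hWa, hWb, key_prod_sum n a, key_prod_sum n b, hsa, hsb]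
          norm_num
  have hAff : A₀ ^ n ≤ ∑ f, Real.sqrt (Wa f * Wb f) := by
    have heq : ∑ f : Fin n → ι, Real.sqrt (Wa f * Wb f)
        = (∑ v, Real.sqrt (a v * b v)) ^ n := by
      rw [← key_prod_sum n (fun v => Real.sqrt (a v * b v))]
      refine Finset.sum_congr rfl fun f _ => ?_
      rw [hWa, hWb]
      simp only
      rw [← Finset.prod_mul_distrib, sqrt_prod' _ _ (fun i _ => mul_nonneg (ha _) (hb _))]
    rw [heq]
    exact pow_le_pow_left₀ hA0 hA n
  have hCS : (∑ f, Real.sqrt (Wa f * Wb f))^2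
      ≤ (∑ f, min (Wa f) (Wb f)) * ∑ f, max (Wa f) (Wb f) := by
    have h := Finset.sum_mul_sq_le_sq_mul_sq Finset.univ
      (fun f => Real.sqrt (min (Wa f) (Wb f))) (fun f => Real.sqrt (max (Wa f) (Wb f)))
    have h1 : ∀ f, Real.sqrt (min (Wa f) (Wb f)) * Real.sqrt (max (Wa f) (Wb f))
        = Real.sqrt (Wa f * Wb f) := by
      intro f
      rw [← Real.sqrt_mul (hmin0 f), min_mul_max]
    have h2 : ∀ f, Real.sqrt (min (Wa f) (Wb f)) ^ 2 = min (Wa f) (Wb f) :=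
      fun f => Real.sq_sqrt (hmin0 f)
    have h3 : ∀ f, Real.sqrt (max (Wa f) (Wb f)) ^ 2 = max (Wa f) (Wb f) :=
      fun f => Real.sq_sqrt (hmax0 f)
    calc (∑ f, Real.sqrt (Wa f * Wb f))^2
        = (∑ f, Real.sqrt (min (Wa f) (Wb f)) * Real.sqrt (max (Wa f) (Wb f)))^2 := by
          rw [Finset.sum_congr rfl fun f _ => (h1 f).symm]
      _ ≤ (∑ f, Real.sqrt (min (Wa f) (Wb f))^2) * ∑ f, Real.sqrt (max (Wa f) (Wb f))^2 := h
      _ = (∑ f, min (Wa f) (Wb f)) * ∑ f, max (Wa f) (Wb f) := by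
          rw [Finset.sum_congr rfl fun f _ => h2 f, Finset.sum_congr rfl fun f _ => h3 f]
  have hminsum0 : 0 ≤ ∑ f, min (Wa f) (Wb f) := Finset.sum_nonneg fun f _ => hmin0 f
  have h2 : (A₀ ^ n) ^ 2 ≤ (∑ f, min (Wa f) (Wb f)) * 2 := by
    calc (A₀ ^ n) ^ 2 ≤ (∑ f, Real.sqrt (Wa f * Wb f))^2 :=
          pow_le_pow_left₀ (pow_nonneg hA0 n) hAff 2
      _ ≤ (∑ f, min (Wa f) (Wb f)) * ∑ f, max (Wa f) (Wb f) := hCS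
      _ ≤ (∑ f, min (Wa f) (Wb f)) * 2 := mul_le_mul_of_nonneg_left hSmax hminsum0
  have hpow : A₀ ^ (2 * n) = (A₀ ^ n) ^ 2 := by rw [mul_comm, pow_mul]
  rw [hpow]
  linarith

lemma sum_flip_pairs {m : ℕ} (i : Fin m) (h : (Fin m → Bool) → ℝ≥0∞) :
    ∑ τ : Fin m → Bool, h τ
      = ∑ τ ∈ Finset.univ.filter (fun τ : Fin m → Bool => τ i = false),
          (h τ + h (Function.update τ i true)) := by
  classical
  rw [Finset.sum_add_distrib]
  rw [← Finset.sum_filter_add_sum_filter_not Finset.univ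
    (fun τ : Fin m → Bool => τ i = false) h]
  congr 1
  refine Finset.sum_nbij' (fun τ => Function.update τ i false)
    (fun τ => Function.update τ i true) ?_ ?_ ?_ ?_ ?_
  · intro τ hτ
    simp [Function.update_self]
  · intro τ hτ
    simp [Function.update_self]
  · intro τ hτ
    simp only [Finset.mem_filter, Finset.mem_univ, true_and] at hτ
    show Function.update (Function.update τ i false) i true = τ
    rw [Function.update_idem]
    have : τ i = true := by simpa using hτ
    rw [← this, Function.update_eq_self]
  · intro τ hτ
    simp only [Finset.mem_filter, Finset.mem_univ, true_and] at hτ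
    show Function.update (Function.update τ i true) i false = τ
    rw [Function.update_idem, ← hτ, Function.update_eq_self]
  · intro τ hτ
    simp only [Finset.mem_filter, Finset.mem_univ, true_and] at hτ
    have ht : τ i = true := by simpa using hτ
    show h τ = h (Function.update (Function.update τ i false) i true)
    rw [Function.update_idem, ← ht, Function.update_eq_self]

set_option maxHeartbeats 2000000 in
theorem stmt_2 {Ω : Type*} [MetricSpace Ω] [MeasurableSpace Ω] [BorelSpace Ω]
    (r : ℝ) (hr : 1 ≤ r) (n : ℕ) (hn : 0 < n)
    (k : ℕ) (hk1 : 1 ≤ k) (hk : k ≤ 32 * n)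
    (S : Set Ω) (hSfin : S.Finite) (hScard : S.ncard = k)
    (est : (Fin n → Ω) → MeasureTheory.Measure Ω) (hmeas : Measurable est)
    (hprob : ∀ x, MeasureTheory.IsProbabilityMeasure (est x)) :
    ENNReal.ofReal (3 * Real.log 2 / 2 ^ (r + 12)) * eSep S ^ r
        * ENNReal.ofReal (Real.sqrt (((k : ℝ) - 1) / n))
      ≤ ⨆ (P : MeasureTheory.Measure Ω) (_ : MeasureTheory.IsProbabilityMeasure P),
          ∫⁻ x, wassersteinPow r P (est x)
            ∂(MeasureTheory.Measure.pi fun _ : Fin n => P) := by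
  classical
  have hr0 : (0:ℝ) ≤ r := le_trans zero_le_one hr
  rcases eq_or_lt_of_le hk1 with hk1' | hk2
  · have hz : Real.sqrt (((k:ℝ) - 1)/n) = 0 := by
      rw [← hk1']; norm_num
    rw [hz]
    simp
  -- ============ main case : 2 ≤ k ============
  have hn1 : (1:ℝ) ≤ (n:ℝ) := by exact_mod_cast hn
  set m : ℕ := k / 2 with hm
  have hm1 : 1 ≤ m := by omega
  have h2m : 2 * m ≤ k := by omega
  have hk2m : k ≤ 2 * m + 1 := by omega
  set mR : ℝ := (m : ℝ) with hmR
  set nR : ℝ := (n : ℝ) with hnR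
  have hmR1 : (1:ℝ) ≤ mR := by rw [hmR]; exact_mod_cast hm1
  have hmR0 : (0:ℝ) < mR := by linarith
  have hnR0 : (0:ℝ) < nR := by rw [hnR]; linarith
  -- ---- the perturbation size δ ----
  set δ : ℝ := min 1 (Real.sqrt (mR / nR) / 2) with hδ
  have hδ0 : (0:ℝ) ≤ δ := le_min zero_le_one (by positivity)
  have hδ1 : δ ≤ 1 := min_le_left _ _
  have hδsq : δ^2 ≤ mR / (4 * nR) := by
    have h := min_le_right 1 (Real.sqrt (mR / nR) / 2)
    have h2 : δ^2 ≤ (Real.sqrt (mR / nR) / 2)^2 := pow_le_pow_left₀ hδ0 h 2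
    rw [div_pow, Real.sq_sqrt (by positivity)] at h2
    calc δ^2 ≤ (mR/nR)/2^2 := h2
      _ = mR/(4*nR) := by rw [div_div]; ring_nf
  -- ---- the 2m separated points ----
  have hcard2 : Fintype.card (Fin m × Bool) ≤ Fintype.card hSfin.toFinset := by
    rw [Fintype.card_coe]
    have hc : hSfin.toFinset.card = k := by
      rw [← Set.ncard_eq_toFinset_card S hSfin, hScard]
    rw [hc, Fintype.card_prod, Fintype.card_bool, Fintype.card_fin]
    omega
  obtain ⟨emb⟩ := Function.Embedding.nonempty_iff_card_le.mpr hcard2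
  set q : Fin m × Bool → Ω := fun u => ((emb u : hSfin.toFinset) : Ω) with hqdef
  have hq : Function.Injective q := fun u v huv => emb.injective (Subtype.ext huv)
  have hqS : ∀ u, q u ∈ S := fun u => hSfin.mem_toFinset.mp (emb u).2
  set ε : ℝ≥0∞ := eSep S with hε
  have hsep : ∀ u v : Fin m × Bool, u ≠ v → ε ≤ edist (q u) (q v) := fun u v huv =>
    eSep_le (hqS u) (hqS v) fun h => huv (hq h)
  -- ---- the weights ----
  set wR : (Fin m → Bool) → (Fin m × Bool) → ℝ :=
    fun τ u => (1 + (if τ u.1 = u.2 then δ else -δ)) / (2 * mR) with hwR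
  have hwR0 : ∀ τ u, 0 ≤ wR τ u := by
    intro τ u
    simp only [hwR]
    refine div_nonneg ?_ (by positivity)
    split <;> linarith
  have hpairR : ∀ τ (l : Fin m), wR τ (l, false) + wR τ (l, true) = 1 / mR := by
    intro τ l
    have hmne : mR ≠ 0 := ne_of_gt hmR0
    simp only [hwR]
    rw [← add_div]
    cases h : τ l <;> norm_num <;> first | tauto | ring
  have hsumR : ∀ τ, ∑ u : Fin m × Bool, wR τ u = 1 := by
    intro τ
    rw [Fintype.sum_prod_type]
    have h1 : ∀ l : Fin m, ∑ b : Bool, wR τ (l, b) = 1 / mR := by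
      intro l
      rw [Fintype.sum_bool, add_comm]
      exact hpairR τ l
    rw [Finset.sum_congr rfl fun l _ => h1 l, Finset.sum_const, Finset.card_univ,
      Fintype.card_fin, nsmul_eq_mul]
    field_simp
    exact hmR.symm
  set wE : (Fin m → Bool) → (Fin m × Bool) → ℝ≥0∞ :=
    fun τ u => ENNReal.ofReal (wR τ u) with hwE
  have hsumE : ∀ τ, ∑ u, wE τ u = 1 := by
    intro τ
    simp only [hwE]
    rw [← ENNReal.ofReal_sum_of_nonneg (fun u _ => hwR0 τ u), hsumR τ, ENNReal.ofReal_one]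
  -- ---- the hypothesis measures ----
  set Pm : (Fin m → Bool) → MeasureTheory.Measure Ω :=
    fun τ => ∑ u, wE τ u • MeasureTheory.Measure.dirac (q u) with hPm
  have hPprob : ∀ τ, MeasureTheory.IsProbabilityMeasure (Pm τ) := by
    intro τ
    constructor
    simp only [hPm]
    rw [MeasureTheory.Measure.finset_sum_apply]
    simp only [MeasureTheory.Measure.smul_apply, MeasureTheory.measure_univ, smul_eq_mul, mul_one]
    exact hsumE τ
  have hPsing : ∀ τ u, Pm τ {q u} = wE τ u := by
    intro τ u
    simp only [hPm]
    rw [MeasureTheory.Measure.finset_sum_apply]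
    have h1 : ∀ v, (wE τ v • MeasureTheory.Measure.dirac (q v)) {q u}
        = if v = u then wE τ v else 0 := by
      intro v
      rw [MeasureTheory.Measure.smul_apply,
        MeasureTheory.Measure.dirac_apply' _ (measurableSet_singleton _), smul_eq_mul,
        Set.indicator_apply]
      simp [hq.eq_iff]
    rw [Finset.sum_congr rfl fun v _ => h1 v, Finset.sum_ite_eq' Finset.univ u (wE τ)]
    simp
  -- ---- loss pieces ----
  set A : (Fin m × Bool) → Set Ω := fun u => EMetric.ball (q u) (ε/2) with hA
  have hAmeas : ∀ u, MeasurableSet (A u) := fun u => EMetric.isOpen_ball.measurableSet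
  set c : ℝ≥0∞ := (ε/2)^r with hc
  set dd : (Fin m → Bool) → (Fin m × Bool) → MeasureTheory.Measure Ω → ℝ≥0∞ :=
    fun τ u Q => (wE τ u - Q (A u)) + (Q (A u) - wE τ u) with hdd
  set ell : Fin m → (Fin m → Bool) → MeasureTheory.Measure Ω → ℝ≥0∞ :=
    fun i τ Q => c * ∑ b : Bool, dd τ (i, b) Q with hell
  have hcost : ∀ τ (Q : MeasureTheory.Measure Ω), MeasureTheory.IsProbabilityMeasure Q →
      ∑ i, ell i τ Q ≤ 2 * wassersteinPow r (Pm τ) Q := by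
    intro τ Q hQ
    have hre : ∑ i, ell i τ Q = c * ∑ u : Fin m × Bool, dd τ u Q := by
      simp only [hell]
      rw [← Finset.mul_sum, Fintype.sum_prod_type]
    rw [hre]
    haveI := hQ
    exact cost_lb q hq ε hsep r hr0 (Pm τ) Q (wE τ) (hPsing τ) (hsumE τ)
  have hellmeas : ∀ i τ, Measurable (fun x : Fin n → Ω => ell i τ (est x)) := by
    intro i τ
    simp only [hell]
    apply Measurable.const_mul
    apply Finset.measurable_sum
    intro b _
    simp only [hdd]
    have hQA : Measurable (fun x : Fin n → Ω => (est x) (A (i, b))) :=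
      (MeasureTheory.Measure.measurable_coe (hAmeas _)).comp hmeas
    exact (measurable_const.sub hQA).add (hQA.sub measurable_const)
  -- ---- product measures ----
  set WW : (Fin m → Bool) → (Fin n → Fin m × Bool) → ℝ≥0∞ :=
    fun τ f => ∏ j, wE τ (f j) with hWW
  set WnR : (Fin m → Bool) → (Fin n → Fin m × Bool) → ℝ :=
    fun τ f => ∏ j, wR τ (f j) with hWnR
  have hWWoR : ∀ τ f, WW τ f = ENNReal.ofReal (WnR τ f) := by
    intro τ f
    simp only [hWW, hWnR, hwE]
    rw [ENNReal.ofReal_prod_of_nonneg (fun j _ => hwR0 τ (f j))]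
  have hπeq : ∀ τ, MeasureTheory.Measure.pi (fun _ : Fin n => Pm τ)
      = ∑ f : Fin n → Fin m × Bool, WW τ f • MeasureTheory.Measure.dirac (fun j => q (f j)) := by
    intro τ
    simp only [hPm, hWW]
    exact pi_discrete n q (wE τ) (hsumE τ)
  set I : Fin m → (Fin m → Bool) → ℝ≥0∞ :=
    fun i τ => ∫⁻ x, ell i τ (est x) ∂(MeasureTheory.Measure.pi fun _ : Fin n => Pm τ) with hI
  have hLB : ∀ τ, ∑ i, I i τ
      ≤ 2 * ∫⁻ x, wassersteinPow r (Pm τ) (est x)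
          ∂(MeasureTheory.Measure.pi fun _ : Fin n => Pm τ) := by
    intro τ
    simp only [hI]
    rw [← MeasureTheory.lintegral_finset_sum' Finset.univ
      (fun i _ => (hellmeas i τ).aemeasurable)]
    calc ∫⁻ x, ∑ i, ell i τ (est x) ∂(MeasureTheory.Measure.pi fun _ : Fin n => Pm τ)
        ≤ ∫⁻ x, 2 * wassersteinPow r (Pm τ) (est x)
            ∂(MeasureTheory.Measure.pi fun _ : Fin n => Pm τ) :=
          MeasureTheory.lintegral_mono fun x => hcost τ (est x) (hprob x)
      _ = 2 * ∫⁻ x, wassersteinPow r (Pm τ) (est x)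
            ∂(MeasureTheory.Measure.pi fun _ : Fin n => Pm τ) :=
          MeasureTheory.lintegral_const_mul' 2 _ ENNReal.ofNat_ne_top
  -- ---- the per-coordinate two-point bound ----
  set γ : ℝ≥0∞ := (c * (2 * ENNReal.ofReal (δ / mR))) * ENNReal.ofReal (1/4) with hγ
  have hpairI : ∀ (i : Fin m) (σ : Fin m → Bool), σ i = false →
      γ ≤ I i σ + I i (Function.update σ i true) := by
    intro i σ hσi
    set σ' : Fin m → Bool := Function.update σ i true with hσ'def
    have hσ'i : σ' i = true := Function.update_self i true σ
    have hσ'ne : ∀ l, l ≠ i → σ' l = σ l := fun l hl => Function.update_of_ne hl true σ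
    -- the common lower measure κ
    set κ : MeasureTheory.Measure (Fin n → Ω) :=
      ∑ f : Fin n → Fin m × Bool,
        min (WW σ f) (WW σ' f) • MeasureTheory.Measure.dirac (fun j => q (f j)) with hκ
    have hκle : ∀ τ, (∀ f, min (WW σ f) (WW σ' f) ≤ WW τ f) →
        κ ≤ MeasureTheory.Measure.pi (fun _ : Fin n => Pm τ) := by
      intro τ hτ
      rw [hπeq τ]
      refine MeasureTheory.Measure.le_iff.mpr fun t ht => ?_
      simp only [hκ]
      rw [MeasureTheory.Measure.finset_sum_apply, MeasureTheory.Measure.finset_sum_apply]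
      refine Finset.sum_le_sum fun f _ => ?_
      rw [MeasureTheory.Measure.smul_apply, MeasureTheory.Measure.smul_apply,
        smul_eq_mul, smul_eq_mul]
      exact mul_le_mul_left (hτ f) _
    have hκσ : κ ≤ MeasureTheory.Measure.pi (fun _ : Fin n => Pm σ) :=
      hκle σ fun f => min_le_left _ _
    have hκσ' : κ ≤ MeasureTheory.Measure.pi (fun _ : Fin n => Pm σ') :=
      hκle σ' fun f => min_le_right _ _
    -- affinity lower bound
    have h01 : (0:ℝ) ≤ 1 - δ^2 := by nlinarith
    have hA00 : (0:ℝ) ≤ 1 - δ^2/mR := by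
      have : δ^2/mR ≤ 1 := by
        rw [div_le_one hmR0]; nlinarith
      linarith
    have haff : 1 - δ^2/mR ≤ ∑ v : Fin m × Bool, Real.sqrt (wR σ v * wR σ' v) := by
      rw [Fintype.sum_prod_type]
      have hterm : ∀ l : Fin m, ∑ b : Bool, Real.sqrt (wR σ (l,b) * wR σ' (l,b))
          = if l = i then Real.sqrt (1 - δ^2) / mR else 1/mR := by
        intro l
        by_cases hl : l = i
        · subst hl
          rw [if_pos rfl, Fintype.sum_bool]
          have e1 : wR σ (l, true) = (1 - δ)/(2*mR) := by
            simp only [hwR]; rw [if_neg (by simp [hσi])]; ring_nf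
          have e2 : wR σ (l, false) = (1 + δ)/(2*mR) := by
            simp only [hwR]; rw [if_pos hσi]
          have e3 : wR σ' (l, true) = (1 + δ)/(2*mR) := by
            simp only [hwR]; rw [if_pos hσ'i]
          have e4 : wR σ' (l, false) = (1 - δ)/(2*mR) := by
            simp only [hwR]; rw [if_neg (by simp [hσ'i])]; ring_nf
          rw [e1, e2, e3, e4]
          have hx : (1 - δ)/(2*mR) * ((1 + δ)/(2*mR)) = (1 - δ^2) * (1/(2*mR))^2 := by ring
          have hy : (1 + δ)/(2*mR) * ((1 - δ)/(2*mR)) = (1 - δ^2) * (1/(2*mR))^2 := by ring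
          rw [hx, hy, Real.sqrt_mul h01, Real.sqrt_sq (by positivity)]
          field_simp
          ring
        · rw [if_neg hl, Fintype.sum_bool]
          have e : ∀ b, wR σ' (l, b) = wR σ (l, b) := by
            intro b; simp only [hwR, hσ'ne l hl]
          rw [e true, e false, Real.sqrt_mul_self (hwR0 σ (l, true)),
            Real.sqrt_mul_self (hwR0 σ (l, false)), add_comm]
          exact hpairR σ l
      rw [Finset.sum_congr rfl fun l _ => hterm l,
        ← Finset.add_sum_erase _ _ (Finset.mem_univ i), if_pos rfl]
      have herase : ∑ l ∈ Finset.univ.erase i,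
          (if l = i then Real.sqrt (1 - δ^2) / mR else 1/mR) = ((m - 1 : ℕ) : ℝ) * (1/mR) := by
        rw [Finset.sum_congr rfl fun l hl => if_neg (Finset.mem_erase.mp hl).1,
          Finset.sum_const, Finset.card_erase_of_mem (Finset.mem_univ i), Finset.card_univ,
          Fintype.card_fin, nsmul_eq_mul]
      rw [herase, Nat.cast_sub hm1, Nat.cast_one]
      have hsq : 1 - δ^2 ≤ Real.sqrt (1 - δ^2) := by
        calc 1 - δ^2 = Real.sqrt ((1-δ^2)^2) := (Real.sqrt_sq h01).symm
          _ ≤ Real.sqrt (1-δ^2) := Real.sqrt_le_sqrt (by nlinarith)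
      have hfin : (1 - δ^2)/mR + (mR - 1) * (1/mR) = 1 - δ^2/mR := by
        field_simp
        ring
      calc 1 - δ^2/mR = (1 - δ^2)/mR + (mR - 1) * (1/mR) := hfin.symm
        _ ≤ Real.sqrt (1 - δ^2)/mR + (mR - 1) * (1/mR) := by
            gcongr
    have hbern : (1:ℝ)/2 ≤ (1 - δ^2/mR)^(2*n) := by
      have hx : (-2:ℝ) ≤ -(δ^2/mR) := by
        have : δ^2/mR ≤ 1 := by rw [div_le_one hmR0]; nlinarith
        linarith
      have hpow := one_add_mul_le_pow hx (2*n)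
      have hcast : ((2*n : ℕ) : ℝ) = 2*nR := by push_cast [hnR]; ring
      rw [hcast] at hpow
      have hsm : 2*nR * (δ^2/mR) ≤ 1/2 := by
        have h1 : δ^2/mR ≤ 1/(4*nR) := by
          rw [div_le_div_iff₀ hmR0 (by positivity)]
          have hstep : δ^2 * (4*nR) ≤ (mR/(4*nR)) * (4*nR) :=
            mul_le_mul_of_nonneg_right hδsq (by positivity)
          have hstep2 : (mR/(4*nR)) * (4*nR) = mR := by field_simp
          linarith
        calc 2*nR * (δ^2/mR) ≤ 2*nR * (1/(4*nR)) := by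
              apply mul_le_mul_of_nonneg_left h1 (by positivity)
          _ = 1/2 := by field_simp; ring
      have : 1 + 2*nR * (-(δ^2/mR)) = 1 - 2*nR*(δ^2/mR) := by ring
      rw [this] at hpow
      have h1mx : (1:ℝ) + -(δ^2/mR) = 1 - δ^2/mR := by ring
      rw [h1mx] at hpow
      linarith
    have hmin : (1:ℝ)/4 ≤ ∑ f : Fin n → Fin m × Bool, min (WnR σ f) (WnR σ' f) := by
      have hl := lecam_min_sum n (wR σ) (wR σ') (hwR0 σ) (hwR0 σ') (hsumR σ) (hsumR σ')
        hA00 haff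
      have : (1:ℝ)/4 ≤ (1 - δ^2/mR)^(2*n)/2 := by linarith
      simp only [hWnR]
      linarith [hl]
    have hκuniv : ENNReal.ofReal (1/4) ≤ κ Set.univ := by
      simp only [hκ]
      rw [MeasureTheory.Measure.finset_sum_apply]
      have hfa : ∀ f : Fin n → Fin m × Bool,
          (min (WW σ f) (WW σ' f) • MeasureTheory.Measure.dirac (fun j => q (f j))) Set.univ
            = ENNReal.ofReal (min (WnR σ f) (WnR σ' f)) := by
        intro f
        rw [MeasureTheory.Measure.smul_apply, MeasureTheory.measure_univ, smul_eq_mul, mul_one,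
          hWWoR σ f, hWWoR σ' f, ← ofReal_min']
      rw [Finset.sum_congr rfl fun f _ => hfa f,
        ← ENNReal.ofReal_sum_of_nonneg (fun f _ => le_min
          (Finset.prod_nonneg fun j _ => hwR0 σ (f j)) (Finset.prod_nonneg fun j _ => hwR0 σ' (f j)))]
      exact ENNReal.ofReal_le_ofReal hmin
    -- pointwise two-point separation
    have hpt : ∀ Q : MeasureTheory.Measure Ω,
        c * (2 * ENNReal.ofReal (δ/mR)) ≤ ell i σ Q + ell i σ' Q := by
      intro Q
      simp only [hell]
      rw [← mul_add]
      refine mul_le_mul_right ?_ c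
      rw [Fintype.sum_bool, Fintype.sum_bool]
      have wσf : wE σ (i,false) = ENNReal.ofReal ((1+δ)/(2*mR)) := by
        simp only [hwE, hwR]; rw [if_pos hσi]
      have wσt : wE σ (i,true) = ENNReal.ofReal ((1-δ)/(2*mR)) := by
        simp only [hwE, hwR]; rw [if_neg (by simp [hσi]), show (1:ℝ) + -δ = 1 - δ from by ring]
      have wσ'f : wE σ' (i,false) = ENNReal.ofReal ((1-δ)/(2*mR)) := by
        simp only [hwE, hwR]; rw [if_neg (by simp [hσ'i]), show (1:ℝ) + -δ = 1 - δ from by ring]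
      have wσ't : wE σ' (i,true) = ENNReal.ofReal ((1+δ)/(2*mR)) := by
        simp only [hwE, hwR]; rw [if_pos hσ'i]
      have hdiff : ENNReal.ofReal ((1+δ)/(2*mR)) - ENNReal.ofReal ((1-δ)/(2*mR))
          = ENNReal.ofReal (δ/mR) := by
        rw [← ENNReal.ofReal_sub _ (div_nonneg (by linarith) (by positivity) : (0:ℝ) ≤ (1-δ)/(2*mR))]
        congr 1
        field_simp
        ring
      have key : ∀ (x x' y : ℝ≥0∞), x - x' ≤ (x - y) + (y - x') := by
        intro x x' y
        calc x - x' ≤ (x - y + y) - x' := tsub_le_tsub_right le_tsub_add _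
          _ ≤ (x - y) + (y - x') := add_tsub_le_assoc
      have c1 : ENNReal.ofReal (δ/mR) ≤ dd σ (i,false) Q + dd σ' (i,false) Q := by
        simp only [hdd]
        rw [wσf, wσ'f, ← hdiff]
        calc ENNReal.ofReal ((1+δ)/(2*mR)) - ENNReal.ofReal ((1-δ)/(2*mR))
            ≤ (ENNReal.ofReal ((1+δ)/(2*mR)) - Q (A (i,false)))
              + (Q (A (i,false)) - ENNReal.ofReal ((1-δ)/(2*mR))) := key _ _ _
          _ ≤ _ := add_le_add le_self_add le_add_self
      have c2 : ENNReal.ofReal (δ/mR) ≤ dd σ (i,true) Q + dd σ' (i,true) Q := by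
        simp only [hdd]
        rw [wσt, wσ't, ← hdiff]
        rw [add_comm ((ENNReal.ofReal ((1-δ)/(2*mR)) - Q (A (i,true)))
          + (Q (A (i,true)) - ENNReal.ofReal ((1-δ)/(2*mR)))) _]
        calc ENNReal.ofReal ((1+δ)/(2*mR)) - ENNReal.ofReal ((1-δ)/(2*mR))
            ≤ (ENNReal.ofReal ((1+δ)/(2*mR)) - Q (A (i,true)))
              + (Q (A (i,true)) - ENNReal.ofReal ((1-δ)/(2*mR))) := key _ _ _
          _ ≤ _ := add_le_add le_self_add le_add_self
      calc 2 * ENNReal.ofReal (δ/mR) = ENNReal.ofReal (δ/mR) + ENNReal.ofReal (δ/mR) :=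
            two_mul _
        _ ≤ (dd σ (i,true) Q + dd σ' (i,true) Q) + (dd σ (i,false) Q + dd σ' (i,false) Q) :=
            add_le_add c2 c1
        _ = (dd σ (i,true) Q + dd σ (i,false) Q) + (dd σ' (i,true) Q + dd σ' (i,false) Q) := by
            ring
    -- integrate against κ
    have hI1 : ∫⁻ x, ell i σ (est x) ∂κ ≤ I i σ :=
      MeasureTheory.lintegral_mono' hκσ le_rfl
    have hI2 : ∫⁻ x, ell i σ' (est x) ∂κ ≤ I i σ' :=
      MeasureTheory.lintegral_mono' hκσ' le_rfl
    calc γ = (c * (2 * ENNReal.ofReal (δ/mR))) * ENNReal.ofReal (1/4) := hγ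
      _ ≤ (c * (2 * ENNReal.ofReal (δ/mR))) * κ Set.univ := mul_le_mul_right hκuniv _
      _ = ∫⁻ _x, c * (2 * ENNReal.ofReal (δ/mR)) ∂κ := (MeasureTheory.lintegral_const _).symm
      _ ≤ ∫⁻ x, (ell i σ (est x) + ell i σ' (est x)) ∂κ :=
          MeasureTheory.lintegral_mono fun x => hpt (est x)
      _ = ∫⁻ x, ell i σ (est x) ∂κ + ∫⁻ x, ell i σ' (est x) ∂κ :=
          MeasureTheory.lintegral_add_left (hellmeas i σ) _
      _ ≤ I i σ + I i σ' := add_le_add hI1 hI2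
  -- ---- Assouad aggregation ----
  set R : ℝ≥0∞ := ⨆ (P : MeasureTheory.Measure Ω) (_ : MeasureTheory.IsProbabilityMeasure P),
      ∫⁻ x, wassersteinPow r P (est x) ∂(MeasureTheory.Measure.pi fun _ : Fin n => P) with hR
  have hRτ : ∀ τ, ∫⁻ x, wassersteinPow r (Pm τ) (est x)
      ∂(MeasureTheory.Measure.pi fun _ : Fin n => Pm τ) ≤ R := by
    intro τ
    rw [hR]
    exact le_iSup_of_le (Pm τ) (le_iSup_of_le (hPprob τ) le_rfl)
  have hcard_filt : ∀ i : Fin m,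
      ((Finset.univ.filter (fun τ : Fin m → Bool => τ i = false)).card : ℝ≥0∞) * 2
        = 2^m := by
    intro i
    have h := sum_flip_pairs i (fun _ => (1:ℝ≥0∞))
    simp only [Finset.sum_const, Finset.card_univ, nsmul_eq_mul, mul_one] at h
    have hcf : Fintype.card (Fin m → Bool) = 2^m := by
      rw [Fintype.card_fun, Fintype.card_bool, Fintype.card_fin]
    rw [hcf] at h
    calc ((Finset.univ.filter (fun τ : Fin m → Bool => τ i = false)).card : ℝ≥0∞) * 2
        = ((Finset.univ.filter (fun τ : Fin m → Bool => τ i = false)).card : ℝ≥0∞) * (1+1) := by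
          norm_num
      _ = ((2^m : ℕ) : ℝ≥0∞) := h.symm
      _ = 2^m := by push_cast; ring
  have hmγR : (m : ℝ≥0∞) * γ ≤ 4 * R := by
    have h1 : ∀ i : Fin m, (2:ℝ≥0∞)^m * γ ≤ 2 * ∑ τ, I i τ := by
      intro i
      rw [sum_flip_pairs i (fun τ => I i τ)]
      calc (2:ℝ≥0∞)^m * γ
          = (((Finset.univ.filter (fun τ : Fin m → Bool => τ i = false)).card : ℝ≥0∞) * 2) * γ := by
            rw [hcard_filt i]
        _ = 2 * (((Finset.univ.filter (fun τ : Fin m → Bool => τ i = false)).card : ℝ≥0∞) * γ) := by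
            ring
        _ = 2 * ∑ σ ∈ Finset.univ.filter (fun τ : Fin m → Bool => τ i = false), γ := by
            rw [Finset.sum_const, nsmul_eq_mul]
        _ ≤ 2 * ∑ σ ∈ Finset.univ.filter (fun τ : Fin m → Bool => τ i = false),
              (I i σ + I i (Function.update σ i true)) := by
            refine mul_le_mul_right (Finset.sum_le_sum fun σ hσ => ?_) 2
            exact hpairI i σ (Finset.mem_filter.mp hσ).2
    have h2 : ∑ _i : Fin m, (2:ℝ≥0∞)^m * γ ≤ ∑ i : Fin m, 2 * ∑ τ, I i τ :=
      Finset.sum_le_sum fun i _ => h1 i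
    have h3 : ∑ i : Fin m, 2 * (∑ τ, I i τ) = 2 * ∑ τ, ∑ i, I i τ := by
      rw [← Finset.mul_sum, Finset.sum_comm]
    have h4 : ∑ τ : Fin m → Bool, ∑ i, I i τ ≤ ∑ _τ : Fin m → Bool, 2 * R :=
      Finset.sum_le_sum fun τ _ => (hLB τ).trans (mul_le_mul_right (hRτ τ) 2)
    have h5 : (m : ℝ≥0∞) * ((2:ℝ≥0∞)^m * γ) = ∑ _i : Fin m, (2:ℝ≥0∞)^m * γ := by
      rw [Finset.sum_const, Finset.card_univ, Fintype.card_fin, nsmul_eq_mul]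
    have h6 : ∑ _τ : Fin m → Bool, 2 * R = (2:ℝ≥0∞)^m * (2 * R) := by
      rw [Finset.sum_const, Finset.card_univ, nsmul_eq_mul]
      congr 1
      rw [Fintype.card_fun, Fintype.card_bool, Fintype.card_fin]
      push_cast
      ring
    have hbig : (2:ℝ≥0∞)^m * ((m : ℝ≥0∞) * γ) ≤ (2:ℝ≥0∞)^m * (4 * R) := by
      calc (2:ℝ≥0∞)^m * ((m : ℝ≥0∞) * γ) = (m : ℝ≥0∞) * ((2:ℝ≥0∞)^m * γ) := by ring
        _ = ∑ _i : Fin m, (2:ℝ≥0∞)^m * γ := h5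
        _ ≤ ∑ i : Fin m, 2 * ∑ τ, I i τ := h2
        _ = 2 * ∑ τ, ∑ i, I i τ := h3
        _ ≤ 2 * ∑ _τ : Fin m → Bool, 2 * R := mul_le_mul_right h4 2
        _ = 2 * ((2:ℝ≥0∞)^m * (2 * R)) := by rw [h6]
        _ = (2:ℝ≥0∞)^m * (4 * R) := by ring
    exact (ENNReal.mul_le_mul_iff_right (by positivity) (by
      exact ENNReal.pow_ne_top ENNReal.ofNat_ne_top)).mp hbig
  -- ---- final numeric computation ----
  -- goal : ofReal C * ε^r * ofReal s ≤ R
  have hδlow : 3 * Real.log 2 / 512 * Real.sqrt (((k:ℝ) - 1)/nR) ≤ δ := by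
    set s : ℝ := Real.sqrt (((k:ℝ) - 1)/nR) with hsdef
    have hs0 : 0 ≤ s := Real.sqrt_nonneg _
    have hL : Real.log 2 < 0.6931471808 := Real.log_two_lt_d9
    have hL0 : (0:ℝ) ≤ Real.log 2 := Real.log_nonneg one_le_two
    have hk32 : (k:ℝ) ≤ 32 * nR := by rw [hnR]; exact_mod_cast hk
    have hs6 : s ≤ 6 := by
      have hfrac : ((k:ℝ) - 1)/nR ≤ 36 := by
        rw [div_le_iff₀ hnR0]
        nlinarith
      calc s ≤ Real.sqrt 36 := Real.sqrt_le_sqrt hfrac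
        _ = 6 := by
          rw [show (36:ℝ) = 6^2 by norm_num, Real.sqrt_sq (by norm_num)]
    have b1 : 3 * Real.log 2 / 512 * s ≤ 1 := by nlinarith
    have b2 : 3 * Real.log 2 / 512 * s ≤ Real.sqrt (mR / nR) / 2 := by
      set Z : ℝ := Real.sqrt (mR / nR) with hZdef
      have hZ0 : 0 ≤ Z := Real.sqrt_nonneg _
      have hkm : (k:ℝ) - 1 ≤ 2 * mR := by
        have : (k:ℝ) ≤ 2*mR + 1 := by rw [hmR]; exact_mod_cast hk2m
        linarith
      have hsZ : s ≤ Real.sqrt 2 * Z := by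
        rw [hZdef, ← Real.sqrt_mul (by norm_num : (0:ℝ) ≤ 2)]
        apply Real.sqrt_le_sqrt
        calc ((k:ℝ) - 1)/nR ≤ (2*mR)/nR := by gcongr
          _ = 2 * (mR/nR) := by ring
      have hsqrt2 : Real.sqrt 2 ≤ 1.5 := by
        have h := Real.sqrt_le_sqrt (show (2:ℝ) ≤ 1.5^2 by norm_num)
        rwa [Real.sqrt_sq (by norm_num : (0:ℝ) ≤ 1.5)] at h
      have hsZ' : s ≤ 1.5 * Z := by nlinarith
      nlinarith
    exact le_min b1 b2
  have hCnn : (0:ℝ) ≤ 3 * Real.log 2 / 2 ^ (r + 12) := by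
    have hL0 : (0:ℝ) ≤ Real.log 2 := Real.log_nonneg one_le_two
    have : (0:ℝ) < 2 ^ (r + 12) := Real.rpow_pos_of_pos two_pos _
    positivity
  have hs0 : (0:ℝ) ≤ Real.sqrt (((k:ℝ) - 1)/nR) := Real.sqrt_nonneg _
  have hreal : 4 * (3 * Real.log 2 / 2 ^ (r + 12) * Real.sqrt (((k:ℝ) - 1)/nR))
      ≤ (1/2)^r * (δ/2) := by
    have hT : (0:ℝ) < 2^r := Real.rpow_pos_of_pos two_pos r
    have h2r12 : (2:ℝ)^(r+12) = 2^r * 4096 := by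
      rw [Real.rpow_add two_pos]
      congr 1
      rw [show (12:ℝ) = ((12:ℕ):ℝ) by norm_num, Real.rpow_natCast]
      norm_num
    have hhalfr : ((1:ℝ)/2)^r = (2^r)⁻¹ := by
      rw [one_div, Real.inv_rpow (by norm_num : (0:ℝ) ≤ 2)]
    rw [h2r12, hhalfr]
    have hgoal2 : 4 * (3*Real.log 2/4096 * Real.sqrt (((k:ℝ) - 1)/nR)) ≤ δ/2 := by
      linarith [hδlow]
    calc 4 * (3*Real.log 2/(2^r*4096) * Real.sqrt (((k:ℝ) - 1)/nR))
        = (2^r)⁻¹ * (4 * (3*Real.log 2/4096 * Real.sqrt (((k:ℝ) - 1)/nR))) := by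
          have hTne : (2:ℝ)^r ≠ 0 := ne_of_gt hT
          field_simp
      _ ≤ (2^r)⁻¹ * (δ/2) := by
          exact mul_le_mul_of_nonneg_left hgoal2 (by positivity)
  have hγ2 : (m:ℝ≥0∞) * γ = ε^r * ENNReal.ofReal ((1/2)^r * (δ/2)) := by
    rw [hγ, hc]
    have hinv2 : ENNReal.ofReal (1/2) = (2:ℝ≥0∞)⁻¹ := by
      rw [one_div, ENNReal.ofReal_inv_of_pos two_pos, ENNReal.ofReal_ofNat]
    have hhalf : (ε/2)^r = ε^r * ENNReal.ofReal ((1/2)^r) := by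
      rw [div_eq_mul_inv, ENNReal.mul_rpow_of_nonneg _ _ hr0]
      congr 1
      rw [← hinv2, ENNReal.ofReal_rpow_of_pos (by norm_num)]
    rw [hhalf]
    have hm' : (m:ℝ≥0∞) = ENNReal.ofReal mR := by
      rw [hmR, ENNReal.ofReal_natCast]
    have h2' : (2:ℝ≥0∞) = ENNReal.ofReal 2 := by
      rw [ENNReal.ofReal_ofNat]
    calc (m:ℝ≥0∞) * ((ε^r * ENNReal.ofReal ((1/2)^r)) * (2 * ENNReal.ofReal (δ/mR))
          * ENNReal.ofReal (1/4))
        = ε^r * ((m:ℝ≥0∞) * ENNReal.ofReal (δ/mR) * 2 * ENNReal.ofReal (1/4)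
            * ENNReal.ofReal ((1/2)^r)) := by ring
      _ = ε^r * (ENNReal.ofReal (mR * (δ/mR) * 2 * (1/4) * (1/2)^r)) := by
          rw [hm', h2']
          rw [← ENNReal.ofReal_mul (by positivity : (0:ℝ) ≤ mR),
            ← ENNReal.ofReal_mul (by positivity : (0:ℝ) ≤ mR * (δ/mR)),
            ← ENNReal.ofReal_mul (by positivity : (0:ℝ) ≤ mR * (δ/mR) * 2),
            ← ENNReal.ofReal_mul (by positivity : (0:ℝ) ≤ mR * (δ/mR) * 2 * (1/4))]
      _ = ε^r * ENNReal.ofReal ((1/2)^r * (δ/2)) := by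
          congr 1
          congr 1
          field_simp
          ring
  have hchain : 4 * (ENNReal.ofReal (3 * Real.log 2 / 2 ^ (r + 12)) * ε ^ r
      * ENNReal.ofReal (Real.sqrt (((k:ℝ) - 1)/nR))) ≤ (m:ℝ≥0∞) * γ := by
    rw [hγ2]
    have h4' : (4:ℝ≥0∞) = ENNReal.ofReal 4 := by rw [ENNReal.ofReal_ofNat]
    calc 4 * (ENNReal.ofReal (3 * Real.log 2 / 2 ^ (r + 12)) * ε ^ r
          * ENNReal.ofReal (Real.sqrt (((k:ℝ) - 1)/nR)))
        = ε^r * (4 * (ENNReal.ofReal (3 * Real.log 2 / 2 ^ (r + 12))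
            * ENNReal.ofReal (Real.sqrt (((k:ℝ) - 1)/nR)))) := by ring
      _ = ε^r * ENNReal.ofReal (4 * (3 * Real.log 2 / 2 ^ (r + 12)
            * Real.sqrt (((k:ℝ) - 1)/nR))) := by
          rw [h4', ← ENNReal.ofReal_mul hCnn,
            ← ENNReal.ofReal_mul (by norm_num : (0:ℝ) ≤ 4)]
      _ ≤ ε^r * ENNReal.ofReal ((1/2)^r * (δ/2)) :=
          mul_le_mul_right (ENNReal.ofReal_le_ofReal hreal) _
  have hfour : 4 * (ENNReal.ofReal (3 * Real.log 2 / 2 ^ (r + 12)) * ε ^ r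
      * ENNReal.ofReal (Real.sqrt (((k:ℝ) - 1)/nR))) ≤ 4 * R :=
    le_trans hchain (le_trans hmγR le_rfl)
  exact (ENNReal.mul_le_mul_iff_right (by norm_num) (by norm_num)).mp hfour
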